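/- For integers k₁, k₂ ≥ 1, the second-order coefficient of the unequal-truncation Hessian operator D^{k₂} ∘ D^{k₁} equals 1: (1/2)[c_0^{k₂} ∑_{m=1}^{k₁} (-1)^{2-m} C(k₁,m) m + c_0^{k₁} ∑_{l=1}^{k₂} (-1)^{2-l} C(k₂,l) l + ∑_{l=1}^{k₂} ∑_{m=1}^{k₁} (-1)^{2-l-m} C(k₂,l) C(k₁,m) (l+m)²/(l·m)] = 1, where c_0^k = ∑_{j=1}^k 1/j. -/

import Mathlib

lemma sgn1 (m : ℕ) : (-1 : ℚ) ^ ((2 : ℤ) - (m : ℤ)) = (-1 : ℚ) ^ m := by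
  rw [zpow_sub₀ (by norm_num : (-1:ℚ) ≠ 0), zpow_natCast]
  rcases Nat.even_or_odd m with h | h <;> simp [h.neg_one_pow] <;> norm_num

lemma sgn2 (l m : ℕ) : (-1 : ℚ) ^ ((2 : ℤ) - (l : ℤ) - (m : ℤ))
    = (-1 : ℚ) ^ l * (-1 : ℚ) ^ m := by
  rw [sub_sub, ← Nat.cast_add, sgn1, pow_add]

lemma altsum (k : ℕ) (hk : 1 ≤ k) :
    ∑ m ∈ Finset.Icc 1 k, (-1 : ℚ) ^ m * (k.choose m : ℚ) = -1 := by
  have h0 : ∑ m ∈ Finset.range (k+1), (-1 : ℚ) ^ m * (k.choose m : ℚ) = 0 := by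
    have := add_pow (-1 : ℚ) 1 k
    simp only [neg_add_cancel, one_pow, mul_one, zero_pow (by omega : k ≠ 0)] at this
    rw [← this]
  have : Finset.range (k+1) = insert 0 (Finset.Icc 1 k) := by
    ext x; simp [Finset.mem_range, Finset.mem_Icc]; omega
  rw [this, Finset.sum_insert (by simp)] at h0
  simp at h0
  linarith

lemma bsum (k : ℕ) (hk : 1 ≤ k) :
    ∑ m ∈ Finset.Icc 1 k, (-1 : ℚ) ^ m * (k.choose m : ℚ) / m
      = -∑ j ∈ Finset.Icc 1 k, (1 : ℚ) / j := by
  induction k with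
  | zero => omega
  | succ n ih =>
    rcases Nat.eq_zero_or_pos n with rfl | hn
    · norm_num
    · have step1 : ∑ m ∈ Finset.Icc 1 (n+1), (-1 : ℚ) ^ m * ((n+1).choose m : ℚ) / m
          = ∑ m ∈ Finset.Icc 1 (n+1),
              ((-1 : ℚ) ^ m * (n.choose m : ℚ) / m
                + (-1 : ℚ) ^ m * (n.choose (m-1) : ℚ) / m) := by
        refine Finset.sum_congr rfl fun m hm => ?_
        obtain ⟨j, rfl⟩ : ∃ j, m = j + 1 := by
          have := (Finset.mem_Icc.mp hm).1; exact ⟨m - 1, by omega⟩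
        rw [Nat.choose_succ_succ]
        push_cast
        ring
      have hA : ∑ m ∈ Finset.Icc 1 (n+1), (-1 : ℚ) ^ m * (n.choose m : ℚ) / m
          = ∑ m ∈ Finset.Icc 1 n, (-1 : ℚ) ^ m * (n.choose m : ℚ) / m := by
        rw [Finset.sum_Icc_succ_top (by omega : 1 ≤ n + 1)]
        simp [Nat.choose_succ_self]
      have hB : ∑ m ∈ Finset.Icc 1 (n+1), (-1 : ℚ) ^ m * (n.choose (m-1) : ℚ) / m
          = -(1 / (n + 1 : ℚ)) := by
        have hcong : ∀ m ∈ Finset.Icc 1 (n+1),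
            (-1 : ℚ) ^ m * (n.choose (m-1) : ℚ) / m
              = ((-1 : ℚ) ^ m * ((n+1).choose m : ℚ)) * (1 / (n + 1 : ℚ)) := by
          intro m hm
          have hm1 : 1 ≤ m := (Finset.mem_Icc.mp hm).1
          have key : (n + 1) * n.choose (m - 1) = (n+1).choose m * m := by
            have := Nat.add_one_mul_choose_eq n (m - 1)
            simpa [Nat.succ_eq_add_one, Nat.sub_add_cancel hm1] using this
          have keyQ : ((n : ℚ) + 1) * (n.choose (m-1) : ℚ)
              = ((n+1).choose m : ℚ) * m := by exact_mod_cast key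
          have hmne : (m : ℚ) ≠ 0 := by positivity
          have hne : (n : ℚ) + 1 ≠ 0 := by positivity
          field_simp
          linear_combination keyQ
        rw [Finset.sum_congr rfl hcong, ← Finset.sum_mul,
          altsum (n+1) (by omega)]
        ring
      rw [step1, Finset.sum_add_distrib, hA, hB, ih hn,
        Finset.sum_Icc_succ_top (by omega : 1 ≤ n + 1)]
      push_cast
      ring

theorem stmt12 (k₁ k₂ : ℕ) (hk₁ : 1 ≤ k₁) (hk₂ : 1 ≤ k₂) :
    (1 / 2 : ℚ) *
      ((∑ j ∈ Finset.Icc 1 k₂, (1 : ℚ) / (j : ℚ))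
          * ∑ m ∈ Finset.Icc 1 k₁, (-1 : ℚ) ^ ((2 : ℤ) - (m : ℤ)) * (k₁.choose m : ℚ) * (m : ℚ)
        + (∑ j ∈ Finset.Icc 1 k₁, (1 : ℚ) / (j : ℚ))
            * ∑ l ∈ Finset.Icc 1 k₂, (-1 : ℚ) ^ ((2 : ℤ) - (l : ℤ)) * (k₂.choose l : ℚ) * (l : ℚ)
        + ∑ l ∈ Finset.Icc 1 k₂, ∑ m ∈ Finset.Icc 1 k₁,
            (-1 : ℚ) ^ ((2 : ℤ) - (l : ℤ) - (m : ℤ))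
              * (k₂.choose l : ℚ) * (k₁.choose m : ℚ)
              * ((l : ℚ) + (m : ℚ)) ^ 2 / ((l : ℚ) * (m : ℚ))) = 1 := by
  simp only [sgn1, sgn2]
  have hdbl : ∑ l ∈ Finset.Icc 1 k₂, ∑ m ∈ Finset.Icc 1 k₁,
      (-1 : ℚ) ^ l * (-1 : ℚ) ^ m * (k₂.choose l : ℚ) * (k₁.choose m : ℚ)
        * ((l : ℚ) + (m : ℚ)) ^ 2 / ((l : ℚ) * (m : ℚ))
      = (∑ l ∈ Finset.Icc 1 k₂, (-1 : ℚ) ^ l * (k₂.choose l : ℚ) * l)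
          * (∑ m ∈ Finset.Icc 1 k₁, (-1 : ℚ) ^ m * (k₁.choose m : ℚ) / m)
        + (∑ l ∈ Finset.Icc 1 k₂, (-1 : ℚ) ^ l * (k₂.choose l : ℚ) / l)
          * (∑ m ∈ Finset.Icc 1 k₁, (-1 : ℚ) ^ m * (k₁.choose m : ℚ) * m)
        + 2 * ((∑ l ∈ Finset.Icc 1 k₂, (-1 : ℚ) ^ l * (k₂.choose l : ℚ))
          * (∑ m ∈ Finset.Icc 1 k₁, (-1 : ℚ) ^ m * (k₁.choose m : ℚ))) := by
    have step : ∀ l ∈ Finset.Icc 1 k₂, ∀ m ∈ Finset.Icc 1 k₁,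
        (-1 : ℚ) ^ l * (-1 : ℚ) ^ m * (k₂.choose l : ℚ) * (k₁.choose m : ℚ)
          * ((l : ℚ) + (m : ℚ)) ^ 2 / ((l : ℚ) * (m : ℚ))
        = ((-1 : ℚ) ^ l * (k₂.choose l : ℚ) * l)
            * ((-1 : ℚ) ^ m * (k₁.choose m : ℚ) / m)
          + ((-1 : ℚ) ^ l * (k₂.choose l : ℚ) / l)
            * ((-1 : ℚ) ^ m * (k₁.choose m : ℚ) * m)
          + 2 * (((-1 : ℚ) ^ l * (k₂.choose l : ℚ))
            * ((-1 : ℚ) ^ m * (k₁.choose m : ℚ))) := ?_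
    · rw [Finset.sum_congr rfl (fun l hl => Finset.sum_congr rfl (step l hl))]
      simp only [Finset.sum_add_distrib, ← Finset.mul_sum, ← Finset.sum_mul]
    intro l hl m hm
    have hl1 : (1:ℕ) ≤ l := (Finset.mem_Icc.mp hl).1
    have hm1 : (1:ℕ) ≤ m := (Finset.mem_Icc.mp hm).1
    have hlne : (l : ℚ) ≠ 0 := by positivity
    have hmne : (m : ℚ) ≠ 0 := by positivity
    field_simp
    ring
  rw [hdbl, bsum k₁ hk₁, bsum k₂ hk₂, altsum k₁ hk₁, altsum k₂ hk₂]
  ring
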